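/- (Lemma 2, Lyapunov function.) Suppose (A1), (A2), (A3) hold, and suppose in addition that either both (A4) and (A5) hold, or (A6) holds. Then for every ρ ≤ 0 in the image of h there exists α > 0 such that, along every differentiable solution θ : [t₀, ∞) → ℝⁿ of θ′(t) = F(θ(t)) whose trajectory stays in C_ρ, the function t ↦ max{−α·h(θ(t)), 0} + max{J(θ(t)) − J(θ*_c), 0} is nonincreasing and is strictly decreasing on every interval on which θ(t) ≠ θ*_c. -/

import Mathlib

set_option maxHeartbeats 1000000

open scoped RealInnerProductSpace
open Set Filter Topology

/-! ### Auxiliary lemmas -/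

/-- value of the right derivative of `max (f ·) 0` at a point where `f` has value `y`
and derivative `y'`. -/
noncomputable def dmx (y y' : ℝ) : ℝ := if 0 < y then y' else if y = 0 then max y' 0 else 0

lemma dmx_pos {y y' : ℝ} (hy : 0 < y) : dmx y y' = y' := if_pos hy

lemma dmx_neg {y y' : ℝ} (hy : y < 0) : dmx y y' = 0 := by
  unfold dmx; rw [if_neg (by linarith), if_neg (by linarith)]

lemma dmx_zero {y y' : ℝ} (hy : y = 0) : dmx y y' = max y' 0 := by
  unfold dmx; rw [if_neg (by simp [hy]), if_pos hy]

lemma dmx_le_max (y y' : ℝ) : dmx y y' ≤ max y' 0 := by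
  unfold dmx
  split_ifs with h1 h2
  · exact le_max_left _ _
  · exact le_rfl
  · exact le_max_right _ _

/-- One-sided derivative of `max (f ·) 0`. -/
lemma hasDerivWithinAt_max_zero {f : ℝ → ℝ} {f' x : ℝ} (hf : HasDerivAt f f' x) :
    HasDerivWithinAt (fun z => max (f z) 0) (dmx (f x) f') (Ici x) x := by
  rcases lt_trichotomy (f x) 0 with hx | hx | hx
  · rw [dmx_neg hx]
    have hev : ∀ᶠ z in 𝓝 x, f z < 0 := hf.continuousAt.eventually_lt continuousAt_const hx
    have : HasDerivAt (fun z => max (f z) 0) 0 x :=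
      (hasDerivAt_const x (0:ℝ)).congr_of_eventuallyEq
        (by filter_upwards [hev] with z hz; simp [max_eq_right hz.le])
    exact this.hasDerivWithinAt
  · have hslope : Tendsto (slope f x) (𝓝[>] x) (𝓝 f') := by
      have h2 := hasDerivWithinAt_iff_tendsto_slope.1 (hf.hasDerivWithinAt (s := Ici x))
      rwa [Set.Ici_sdiff_left] at h2
    rw [dmx_zero hx, hasDerivWithinAt_iff_tendsto_slope, Set.Ici_sdiff_left]
    have hkey : ∀ z ∈ Ioi x, slope (fun z => max (f z) 0) x z = max (slope f x z) 0 := by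
      intro z hz
      have hzx : 0 < z - x := sub_pos.2 hz
      rw [slope_def_field, slope_def_field, hx, max_self, sub_zero, sub_zero]
      rcases le_or_gt (f z) 0 with h | h
      · rw [max_eq_right h, max_eq_right (div_nonpos_of_nonpos_of_nonneg h hzx.le), zero_div]
      · rw [max_eq_left h.le, max_eq_left (div_pos h hzx).le]
    have h2 : Tendsto (fun z => max (slope f x z) 0) (𝓝[>] x) (𝓝 (max f' 0)) :=
      hslope.max tendsto_const_nhds
    exact h2.congr' (eventually_nhdsWithin_of_forall fun z hz => (hkey z hz).symm)
  · rw [dmx_pos hx]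
    have hev : ∀ᶠ z in 𝓝 x, (0:ℝ) < f z :=
      continuousAt_const.eventually_lt hf.continuousAt hx
    have : HasDerivAt (fun z => max (f z) 0) f' x :=
      hf.congr_of_eventuallyEq (by filter_upwards [hev] with z hz; simp [max_eq_left hz.le])
    exact this.hasDerivWithinAt

/-- Comparison lemma: a continuous function with nonpositive right derivative
does not increase. -/
lemma fb_le_fa {f D : ℝ → ℝ} {a b : ℝ} (hab : a ≤ b) (hco : ContinuousOn f (Icc a b))
    (hd : ∀ t ∈ Ico a b, HasDerivWithinAt f (D t) (Ici t) t)
    (h0 : ∀ t ∈ Ico a b, D t ≤ 0) : f b ≤ f a := by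
  rcases eq_or_lt_of_le hab with rfl | hab'
  · exact le_refl _
  have key : ∀ ε > (0:ℝ), f b ≤ f a + ε * (b - a) := by
    intro ε hε
    have hB : ∀ t, HasDerivAt (fun t => f a + ε * (t - a)) ε t := by
      intro t
      simpa using (((hasDerivAt_id t).sub_const a).const_mul ε).const_add (f a)
    have := image_le_of_deriv_right_le_deriv_boundary (f' := D) hco hd
      (B := fun t => f a + ε * (t - a)) (B' := fun _ => ε) (by simp)
      (fun t _ => (hB t).continuousAt.continuousWithinAt)
      (fun t _ => (hB t).hasDerivWithinAt)
      (fun t ht => (h0 t ht).trans hε.le)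
    simpa using this (right_mem_Icc.2 hab)
  have : ∀ ε > (0:ℝ), f b ≤ f a + ε := by
    intro ε hε
    have := key (ε / (b - a)) (div_pos hε (by linarith))
    rwa [div_mul_cancel₀ _ (by linarith : b - a ≠ 0)] at this
  exact le_of_forall_pos_le_add this

-- near-field / compact-case bound
lemma arith_near {s N G hv c M L α : ℝ} (hc : 0 < c) (hv0 : hv < 0) (hL : 0 < L)
    (hLG : L < G) (hN : 0 ≤ N) (hNM : N ≤ M) (hCS : s ≤ N * G) (hα : 1 + M / L ≤ α)
    (hs : 0 < s) :
    -N ^ 2 + (s - c * hv) / G ^ 2 * s < α * (c * -hv) := by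
  have hG : 0 < G := hL.trans hLG
  have hG2 : 0 < G ^ 2 := by positivity
  have hM : 0 ≤ M := hN.trans hNM
  have hML : 0 ≤ M / L := by positivity
  have e1 : (s - c * hv) / G ^ 2 * s = (s ^ 2 + c * (-hv) * s) / G ^ 2 := by ring
  rw [e1]
  have hs2 : s ^ 2 ≤ N ^ 2 * G ^ 2 := by nlinarith
  have hNMG : N * G ≤ M / L * G ^ 2 := by
    have h1 : N * L ≤ M * G := by nlinarith
    rw [div_mul_eq_mul_div, le_div_iff₀ hL]
    nlinarith
  have hpos : 0 < c * (-hv) := mul_pos hc (by linarith)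
  have h2 : c * (-hv) * s ≤ c * (-hv) * (M / L * G ^ 2) :=
    mul_le_mul_of_nonneg_left (hCS.trans hNMG) hpos.le
  have key : (s ^ 2 + c * (-hv) * s) / G ^ 2 ≤ N ^ 2 + c * (-hv) * (M / L) := by
    rw [div_le_iff₀ hG2]
    nlinarith
  have hfin : c * (-hv) * (M / L) < α * (c * (-hv)) := by
    have := mul_le_mul_of_nonneg_right hα hpos.le
    nlinarith
  have e2 : α * (c * -hv) = α * (c * (-hv)) := by ring
  linarith

-- far-field bound (A4 case)
lemma arith_far {s N G hv c fs L ρ α : ℝ} (hc : 0 < c) (hv0 : hv < 0) (hρ : ρ ≤ hv)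
    (hL : 0 < L) (hLG : L < G) (hN : 0 ≤ N) (hfs0 : 0 ≤ fs) (hfs1 : fs < 1)
    (hCS : s ≤ fs * (N * G)) (hα : 1 + c * (-ρ) / (4 * L ^ 2 * (1 - fs ^ 2)) ≤ α)
    (hs : 0 < s) :
    -N ^ 2 + (s - c * hv) / G ^ 2 * s < α * (c * -hv) := by
  have hG : 0 < G := hL.trans hLG
  have hG2 : 0 < G ^ 2 := by positivity
  have hfs2 : 0 < 1 - fs ^ 2 := by nlinarith
  have e1 : (s - c * hv) / G ^ 2 * s = (s ^ 2 + c * (-hv) * s) / G ^ 2 := by ring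
  rw [e1]
  have hs2 : s ^ 2 ≤ fs ^ 2 * N ^ 2 * G ^ 2 := by nlinarith
  have h2 : c * (-hv) * s ≤ c * (-hv) * (N / L) * G ^ 2 := by
    have h3 : s ≤ N / L * G ^ 2 := by
      have h4 : fs * (N * G) ≤ N * G := by nlinarith
      have h5 : N * G * L ≤ N * G * G := by nlinarith
      rw [div_mul_eq_mul_div, le_div_iff₀ hL]
      nlinarith
    nlinarith [mul_le_mul_of_nonneg_left h3 (mul_pos hc (by linarith : (0:ℝ) < -hv)).le]
  have key : (s ^ 2 + c * (-hv) * s) / G ^ 2 ≤ fs ^ 2 * N ^ 2 + c * (-hv) * (N / L) := by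
    rw [div_le_iff₀ hG2]
    nlinarith
  set β := c * (-hv) / L with hβ
  have hpos : 0 < c * (-hv) := mul_pos hc (by linarith)
  have hβ0 : 0 < β := div_pos hpos hL
  have hquad : -(1 - fs ^ 2) * N ^ 2 + β * N ≤ β ^ 2 / (4 * (1 - fs ^ 2)) := by
    rw [le_div_iff₀ (by positivity)]
    nlinarith [sq_nonneg (2 * (1 - fs ^ 2) * N - β)]
  have hfin : β ^ 2 / (4 * (1 - fs ^ 2)) < α * (c * (-hv)) := by
    have e2 : β ^ 2 / (4 * (1 - fs ^ 2))
        = c * (-hv) * (c * (-hv) / (4 * L ^ 2 * (1 - fs ^ 2))) := by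
      rw [hβ]; field_simp
    have h6 : c * (-hv) / (4 * L ^ 2 * (1 - fs ^ 2)) ≤ c * (-ρ) / (4 * L ^ 2 * (1 - fs ^ 2)) := by
      gcongr
    have h8 := mul_le_mul_of_nonneg_right hα hpos.le
    have h9 := mul_le_mul_of_nonneg_left h6 hpos.le
    rw [e2]
    nlinarith
  have : c * (-hv) * (N / L) = β * N := by rw [hβ]; ring
  have e3 : α * (c * -hv) = α * (c * (-hv)) := by ring
  linarith

open Classical in
/-- The safe-gradient-flow vector field `F`. -/
noncomputable def Fvec {n : ℕ} (J h : EuclideanSpace ℝ (Fin n) → ℝ) (c : ℝ)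
    (θ : EuclideanSpace ℝ (Fin n)) : EuclideanSpace ℝ (Fin n) :=
  if gradient h θ = 0 then -gradient J θ
  else -gradient J θ +
    (max (⟪gradient J θ, gradient h θ⟫ - c * h θ) 0 / ‖gradient h θ‖ ^ 2) • gradient h θ

section FvecLemmas

variable {n : ℕ} {J h : EuclideanSpace ℝ (Fin n) → ℝ} {c : ℝ}

lemma inner_h_Fvec (x : EuclideanSpace ℝ (Fin n)) (hg : gradient h x ≠ 0) :
    ⟪gradient h x, Fvec J h c x⟫ =
      -⟪gradient h x, gradient J x⟫ + max (⟪gradient J x, gradient h x⟫ - c * h x) 0 := by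
  rw [Fvec, if_neg hg, inner_add_right, inner_neg_right, real_inner_smul_right,
    real_inner_self_eq_norm_sq,
    div_mul_cancel₀ _ (pow_ne_zero 2 (norm_ne_zero_iff.2 hg))]

lemma inner_J_Fvec (x : EuclideanSpace ℝ (Fin n)) (hg : gradient h x ≠ 0) :
    ⟪gradient J x, Fvec J h c x⟫ =
      -‖gradient J x‖ ^ 2 + (max (⟪gradient J x, gradient h x⟫ - c * h x) 0 / ‖gradient h x‖ ^ 2)
        * ⟪gradient J x, gradient h x⟫ := by
  rw [Fvec, if_neg hg, inner_add_right, inner_neg_right, real_inner_smul_right,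
    real_inner_self_eq_norm_sq]

lemma inner_J_Fvec_zero (x : EuclideanSpace ℝ (Fin n)) (hg : gradient h x = 0) :
    ⟪gradient J x, Fvec J h c x⟫ = -‖gradient J x‖ ^ 2 := by
  rw [Fvec, if_pos hg, inner_neg_right, real_inner_self_eq_norm_sq]

end FvecLemmas
/-- Lemma 2, Lyapunov function: under (A1)–(A3) and either ((A4) and (A5))
or (A6), for every ρ ≤ 0 in the image of h there is α > 0 such that
`V(θ) = max{−α·h(θ),0} + max{J(θ)−J(θ*_c),0}` is nonincreasing (strictly decreasing away
from θ*_c) along every solution of θ' = F(θ) that stays in C_ρ. -/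
theorem stmt11 {n : ℕ} (hn : 1 ≤ n) (J h : EuclideanSpace ℝ (Fin n) → ℝ) (c : ℝ) (hc : 0 < c)
    (θc : EuclideanSpace ℝ (Fin n))
    (hJ : ContDiff ℝ 1 J) (hJ' : LocallyLipschitz (gradient J))
    (hh : ContDiff ℝ 1 h) (hh' : LocallyLipschitz (gradient h))
    (hA1 : 0 ≤ h θc ∧ (∀ θ, 0 ≤ h θ → θ ≠ θc → J θc < J θ) ∧
      (∀ θ, 0 ≤ h θ → gradient J θ = 0 → θ = θc))
    (hA2 : (∃ θ, 0 ≤ h θ) ∧ ∀ ρ ∈ Set.range h, ρ ≤ 0 →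
      ∃ L > 0, ∀ θ, h θ ≤ 0 → ρ ≤ h θ → L < ‖gradient h θ‖)
    (hA3 : ∀ θ, h θ = 0 →
      ⟪gradient h θ, gradient J θ⟫ = ‖gradient h θ‖ * ‖gradient J θ‖ → θ = θc)
    (hA456 :
      ((∃ rs > (0:ℝ), ∃ fs, 0 ≤ fs ∧ fs < 1 ∧ ∀ θ, h θ ≤ 0 → rs ≤ ‖θ - θc‖ →
          ⟪gradient J θ, gradient h θ⟫ ≤ fs * (‖gradient J θ‖ * ‖gradient h θ‖)) ∧
        ((∀ θ, θ ≠ θc → 0 < max (-h θ) 0 + max (J θ - J θc) 0) ∧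
          max (-h θc) 0 + max (J θc - J θc) 0 = 0 ∧
          ∀ Mv : ℝ, ∃ R : ℝ, ∀ θ, R ≤ ‖θ - θc‖ →
            Mv ≤ max (-h θ) 0 + max (J θ - J θc) 0)) ∨
      (∀ ρ ∈ Set.range h, ρ ≤ 0 →
        IsCompact {θ : EuclideanSpace ℝ (Fin n) | ρ ≤ h θ})) :
    ∀ ρ ∈ Set.range h, ρ ≤ 0 → ∃ α > (0:ℝ),
      ∀ (t₀ : ℝ) (θ : ℝ → EuclideanSpace ℝ (Fin n)),
        (∀ t ≥ t₀, HasDerivAt θ (Fvec J h c (θ t)) t) →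
        (∀ t ≥ t₀, ρ ≤ h (θ t)) →
        AntitoneOn (fun t => max (-(α * h (θ t))) 0 + max (J (θ t) - J θc) 0)
          (Set.Ici t₀) ∧
        (∀ t₁ t₂, t₀ ≤ t₁ → t₁ < t₂ → (∀ t ∈ Set.Icc t₁ t₂, θ t ≠ θc) →
          max (-(α * h (θ t₂))) 0 + max (J (θ t₂) - J θc) 0 <
            max (-(α * h (θ t₁))) 0 + max (J (θ t₁) - J θc) 0) := by
  obtain ⟨hA1a, hA1b, hA1c⟩ := hA1
  intro ρ hρr hρ0
  obtain ⟨L, hL, hLbd⟩ := hA2.2 ρ hρr hρ0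
  -- the gradient of J vanishes at θc if θc is interior
  have hgradc : 0 < h θc → gradient J θc = 0 := by
    intro hpos
    have hev : ∀ᶠ z in 𝓝 θc, 0 < h z :=
      continuousAt_const.eventually_lt hh.continuous.continuousAt hpos
    have hmin : IsLocalMin J θc := by
      filter_upwards [hev] with z hz
      rcases eq_or_ne z θc with rfl | hne
      · exact le_rfl
      · exact (hA1b z hz.le hne).le
    have h0 : fderiv ℝ J θc = 0 := hmin.fderiv_eq_zero
    show (InnerProductSpace.toDual ℝ _).symm (fderiv ℝ J θc) = 0
    rw [h0, map_zero]
  -- choice of α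
  have hMain : ∃ α > (0:ℝ), ∀ x, ρ ≤ h x → h x < 0 →
      ⟪gradient J x, Fvec J h c x⟫ < α * (c * -(h x)) := by
    rcases hA456 with ⟨⟨rs, hrs, fs, hfs0, hfs1, hA4⟩, -⟩ | hA6
    · -- (A4): compact near-field ball plus far-field angle condition
      have hKc : IsCompact (Metric.closedBall θc rs ∩ {x | ρ ≤ h x ∧ h x ≤ 0}) := by
        apply (isCompact_closedBall θc rs).inter_right
        have : {x : EuclideanSpace ℝ (Fin n) | ρ ≤ h x ∧ h x ≤ 0}
            = {x | ρ ≤ h x} ∩ {x | h x ≤ 0} := rfl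
        rw [this]
        exact (isClosed_le continuous_const hh.continuous).inter
          (isClosed_le hh.continuous continuous_const)
      obtain ⟨M0, hM0⟩ := hKc.exists_bound_of_continuousOn hJ'.continuous.continuousOn
      set M := max M0 0 with hM
      have hfs2 : 0 < 1 - fs ^ 2 := by nlinarith
      have hML0 : (0:ℝ) ≤ M / L := div_nonneg (le_max_right M0 0) hL.le
      have hρ00 : (0:ℝ) ≤ c * (-ρ) / (4 * L ^ 2 * (1 - fs ^ 2)) :=
        div_nonneg (mul_nonneg hc.le (by linarith)) (by positivity)
      refine ⟨1 + M / L + c * (-ρ) / (4 * L ^ 2 * (1 - fs ^ 2)), by linarith, ?_⟩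
      intro x hρx hneg
      have hgL := hLbd x hneg.le hρx
      have hg : gradient h x ≠ 0 := by
        intro e; rw [e, norm_zero] at hgL; linarith
      have hG2 : (0:ℝ) < ‖gradient h x‖ ^ 2 := pow_pos (hL.trans hgL) 2
      rw [inner_J_Fvec x hg]
      rcases le_or_gt ⟪gradient J x, gradient h x⟫ 0 with hs | hs
      · have hterm : max (⟪gradient J x, gradient h x⟫ - c * h x) 0 / ‖gradient h x‖ ^ 2
            * ⟪gradient J x, gradient h x⟫ ≤ 0 :=
          mul_nonpos_of_nonneg_of_nonpos (div_nonneg (le_max_right _ _) hG2.le) hs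
        have hαp : (0:ℝ) < 1 + M / L + c * (-ρ) / (4 * L ^ 2 * (1 - fs ^ 2)) := by linarith
        have : (0:ℝ) < c * -(h x) := mul_pos hc (by linarith)
        nlinarith [sq_nonneg ‖gradient J x‖]
      · have hmx : max (⟪gradient J x, gradient h x⟫ - c * h x) 0
            = ⟪gradient J x, gradient h x⟫ - c * h x := max_eq_left (by nlinarith)
        rw [hmx]
        rcases le_or_gt ‖x - θc‖ rs with hnear | hfar
        · have hxK : x ∈ Metric.closedBall θc rs ∩ {x | ρ ≤ h x ∧ h x ≤ 0} := by
            refine ⟨?_, hρx, hneg.le⟩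
            rw [Metric.mem_closedBall, dist_eq_norm]
            exact hnear
          have hjM : ‖gradient J x‖ ≤ M := (hM0 x hxK).trans (le_max_left _ _)
          exact arith_near hc hneg hL hgL (norm_nonneg _) hjM
            (real_inner_le_norm _ _) (by linarith) hs
        · have hCS := hA4 x hneg.le hfar.le
          exact arith_far hc hneg hρx hL hgL (norm_nonneg _) hfs0 hfs1 hCS (by linarith) hs
    · -- (A6): compact superlevel set
      have hKc : IsCompact ({x : EuclideanSpace ℝ (Fin n) | ρ ≤ h x} ∩ {x | h x ≤ 0}) :=
        (hA6 ρ hρr hρ0).inter_right (isClosed_le hh.continuous continuous_const)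
      obtain ⟨M0, hM0⟩ := hKc.exists_bound_of_continuousOn hJ'.continuous.continuousOn
      set M := max M0 0 with hM
      have hML0 : (0:ℝ) ≤ M / L := div_nonneg (le_max_right M0 0) hL.le
      refine ⟨1 + M / L, by linarith, ?_⟩
      intro x hρx hneg
      have hgL := hLbd x hneg.le hρx
      have hg : gradient h x ≠ 0 := by
        intro e; rw [e, norm_zero] at hgL; linarith
      have hG2 : (0:ℝ) < ‖gradient h x‖ ^ 2 := pow_pos (hL.trans hgL) 2
      rw [inner_J_Fvec x hg]
      rcases le_or_gt ⟪gradient J x, gradient h x⟫ 0 with hs | hs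
      · have hterm : max (⟪gradient J x, gradient h x⟫ - c * h x) 0 / ‖gradient h x‖ ^ 2
            * ⟪gradient J x, gradient h x⟫ ≤ 0 :=
          mul_nonpos_of_nonneg_of_nonpos (div_nonneg (le_max_right _ _) hG2.le) hs
        have hαp : (0:ℝ) < 1 + M / L := by linarith
        have : (0:ℝ) < c * -(h x) := mul_pos hc (by linarith)
        nlinarith [sq_nonneg ‖gradient J x‖]
      · have hmx : max (⟪gradient J x, gradient h x⟫ - c * h x) 0
            = ⟪gradient J x, gradient h x⟫ - c * h x := max_eq_left (by nlinarith)
        rw [hmx]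
        have hjM : ‖gradient J x‖ ≤ M := (hM0 x ⟨hρx, hneg.le⟩).trans (le_max_left _ _)
        exact arith_near hc hneg hL hgL (norm_nonneg _) hjM
          (real_inner_le_norm _ _) le_rfl hs
  obtain ⟨α, hα, hbound⟩ := hMain
  -- pointwise sign of the (one-sided) derivative of the Lyapunov function
  have hpoint : ∀ x, ρ ≤ h x →
      dmx (-(α * h x)) (-(α * ⟪gradient h x, Fvec J h c x⟫)) +
        dmx (J x - J θc) ⟪gradient J x, Fvec J h c x⟫ ≤ 0 ∧
      (x ≠ θc → dmx (-(α * h x)) (-(α * ⟪gradient h x, Fvec J h c x⟫)) +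
        dmx (J x - J θc) ⟪gradient J x, Fvec J h c x⟫ < 0) := by
    intro x hρx
    rcases lt_trichotomy (h x) 0 with hneg | hzero | hpos
    · -- unsafe region
      have hgL := hLbd x hneg.le hρx
      have hg : gradient h x ≠ 0 := by
        intro e; rw [e, norm_zero] at hgL; linarith
      have hcomm := real_inner_comm (gradient h x) (gradient J x)
      have hhd : c * -(h x) ≤ ⟪gradient h x, Fvec J h c x⟫ := by
        rw [inner_h_Fvec x hg]
        rcases le_or_gt (⟪gradient J x, gradient h x⟫ - c * h x) 0 with hm | hm
        · rw [max_eq_right hm]; linarith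
        · rw [max_eq_left hm.le]; linarith
      have h1 : dmx (-(α * h x)) (-(α * ⟪gradient h x, Fvec J h c x⟫))
          = -(α * ⟪gradient h x, Fvec J h c x⟫) := dmx_pos (by nlinarith)
      have hjd := hbound x hρx hneg
      have hα' : 0 < α * (c * -(h x)) := mul_pos hα (mul_pos hc (by linarith))
      have h2 : dmx (J x - J θc) ⟪gradient J x, Fvec J h c x⟫
          ≤ max ⟪gradient J x, Fvec J h c x⟫ 0 := dmx_le_max _ _
      have h3 : max ⟪gradient J x, Fvec J h c x⟫ 0 < α * (c * -(h x)) := max_lt hjd hα'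
      have h4 : -(α * ⟪gradient h x, Fvec J h c x⟫) ≤ -(α * (c * -(h x))) := by nlinarith
      have hlt : dmx (-(α * h x)) (-(α * ⟪gradient h x, Fvec J h c x⟫)) +
          dmx (J x - J θc) ⟪gradient J x, Fvec J h c x⟫ < 0 := by
        rw [h1]; linarith
      exact ⟨hlt.le, fun _ => hlt⟩
    · -- boundary
      have hgL := hLbd x hzero.le hρx
      have hg : gradient h x ≠ 0 := by
        intro e; rw [e, norm_zero] at hgL; linarith
      have hG2 : (0:ℝ) < ‖gradient h x‖ ^ 2 := pow_pos (hL.trans hgL) 2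
      have hcomm := real_inner_comm (gradient h x) (gradient J x)
      have hhd : 0 ≤ ⟪gradient h x, Fvec J h c x⟫ := by
        rw [inner_h_Fvec x hg, hzero, mul_zero, sub_zero]
        rcases le_or_gt ⟪gradient J x, gradient h x⟫ 0 with hm | hm
        · rw [max_eq_right hm]; linarith
        · rw [max_eq_left hm.le]; linarith
      have h1 : dmx (-(α * h x)) (-(α * ⟪gradient h x, Fvec J h c x⟫)) = 0 := by
        rw [hzero, mul_zero, neg_zero, dmx_zero rfl,
          max_eq_right (by nlinarith : -(α * ⟪gradient h x, Fvec J h c x⟫) ≤ 0)]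
      have hjd : ⟪gradient J x, Fvec J h c x⟫ ≤ 0 := by
        rw [inner_J_Fvec x hg, hzero, mul_zero, sub_zero]
        rcases le_or_gt ⟪gradient J x, gradient h x⟫ 0 with hm | hm
        · rw [max_eq_right hm, zero_div, zero_mul]
          nlinarith [sq_nonneg ‖gradient J x‖]
        · rw [max_eq_left hm.le]
          have hCS := real_inner_le_norm (gradient J x) (gradient h x)
          have e3 : ⟪gradient J x, gradient h x⟫ / ‖gradient h x‖ ^ 2
              * ⟪gradient J x, gradient h x⟫
              = ⟪gradient J x, gradient h x⟫ ^ 2 / ‖gradient h x‖ ^ 2 := by ring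
          have h5 : ⟪gradient J x, gradient h x⟫ ^ 2 / ‖gradient h x‖ ^ 2
              ≤ ‖gradient J x‖ ^ 2 := by
            rw [div_le_iff₀ hG2]; nlinarith
          rw [e3]; linarith
      constructor
      · have := dmx_le_max (J x - J θc) ⟪gradient J x, Fvec J h c x⟫
        have hm0 : max ⟪gradient J x, Fvec J h c x⟫ 0 = 0 := max_eq_right hjd
        linarith
      · intro hne
        have hq : 0 < J x - J θc := sub_pos.2 (hA1b x hzero.symm.le hne)
        have hj : gradient J x ≠ 0 := fun e => hne (hA1c x hzero.symm.le e)
        have hjn : 0 < ‖gradient J x‖ := norm_pos_iff.2 hj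
        have hjd' : ⟪gradient J x, Fvec J h c x⟫ < 0 := by
          rw [inner_J_Fvec x hg, hzero, mul_zero, sub_zero]
          rcases le_or_gt ⟪gradient J x, gradient h x⟫ 0 with hm | hm
          · rw [max_eq_right hm, zero_div, zero_mul]; nlinarith
          · have hCS : ⟪gradient h x, gradient J x⟫ < ‖gradient h x‖ * ‖gradient J x‖ :=
              lt_of_le_of_ne (real_inner_le_norm _ _) (fun e => hne (hA3 x hzero e))
            rw [max_eq_left hm.le]
            have e3 : ⟪gradient J x, gradient h x⟫ / ‖gradient h x‖ ^ 2
                * ⟪gradient J x, gradient h x⟫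
                = ⟪gradient J x, gradient h x⟫ ^ 2 / ‖gradient h x‖ ^ 2 := by ring
            have h5 : ⟪gradient J x, gradient h x⟫ ^ 2 / ‖gradient h x‖ ^ 2
                < ‖gradient J x‖ ^ 2 := by
              rw [div_lt_iff₀ hG2]; nlinarith [norm_nonneg (gradient h x)]
            rw [e3]; linarith
        rw [h1, dmx_pos hq]
        linarith
    · -- interior
      have h1 : dmx (-(α * h x)) (-(α * ⟪gradient h x, Fvec J h c x⟫)) = 0 :=
        dmx_neg (by nlinarith)
      by_cases hne : x = θc
      · have hj0 : gradient J x = 0 := by rw [hne]; exact hgradc (hne ▸ hpos)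
        have hjd : ⟪gradient J x, Fvec J h c x⟫ = 0 := by rw [hj0, inner_zero_left]
        have hq0 : J x - J θc = 0 := by rw [hne, sub_self]
        have h2 : dmx (J x - J θc) ⟪gradient J x, Fvec J h c x⟫ = 0 := by
          rw [dmx_zero hq0, hjd, max_self]
        exact ⟨by rw [h1, h2]; norm_num, fun hne' => absurd hne hne'⟩
      · have hq : 0 < J x - J θc := sub_pos.2 (hA1b x hpos.le hne)
        have hj : gradient J x ≠ 0 := fun e => hne (hA1c x hpos.le e)
        have hjn : 0 < ‖gradient J x‖ := norm_pos_iff.2 hj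
        have hjd : ⟪gradient J x, Fvec J h c x⟫ < 0 := by
          by_cases hg : gradient h x = 0
          · rw [inner_J_Fvec_zero x hg]; nlinarith
          · rw [inner_J_Fvec x hg]
            have hG2 : (0:ℝ) < ‖gradient h x‖ ^ 2 := pow_pos (norm_pos_iff.2 hg) 2
            rcases le_or_gt (⟪gradient J x, gradient h x⟫ - c * h x) 0 with hm | hm
            · rw [max_eq_right hm, zero_div, zero_mul]; nlinarith
            · rw [max_eq_left hm.le]
              have hs : 0 < ⟪gradient J x, gradient h x⟫ := by nlinarith
              have hCS := real_inner_le_norm (gradient J x) (gradient h x)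
              have h5 : (⟪gradient J x, gradient h x⟫ - c * h x) / ‖gradient h x‖ ^ 2
                  * ⟪gradient J x, gradient h x⟫ < ‖gradient J x‖ ^ 2 := by
                rw [div_mul_eq_mul_div, div_lt_iff₀ hG2]
                nlinarith [mul_pos hc hpos,
                  mul_pos (mul_pos hc hpos) hs,
                  mul_self_le_mul_self hs.le hCS]
              linarith
        have hlt : dmx (-(α * h x)) (-(α * ⟪gradient h x, Fvec J h c x⟫)) +
            dmx (J x - J θc) ⟪gradient J x, Fvec J h c x⟫ < 0 := by
          rw [h1, dmx_pos hq]; linarith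
        exact ⟨hlt.le, fun _ => hlt⟩
  refine ⟨α, hα, ?_⟩
  intro t₀ θ hθ hstay
  have hgJd : Differentiable ℝ J := hJ.differentiable one_ne_zero
  have hghd : Differentiable ℝ h := hh.differentiable one_ne_zero
  have hderivθ : ∀ t, t₀ ≤ t → ∀ (f : EuclideanSpace ℝ (Fin n) → ℝ), Differentiable ℝ f →
      HasDerivAt (fun s => f (θ s)) ⟪gradient f (θ t), Fvec J h c (θ t)⟫ t := by
    intro t ht f hf
    have hfe : HasFDerivAt f (InnerProductSpace.toDual ℝ _ (gradient f (θ t))) (θ t) :=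
      hasGradientAt_iff_hasFDerivAt.1 (hf (θ t)).hasGradientAt
    have hcomp := hfe.comp_hasDerivAt t (hθ t ht)
    rw [InnerProductSpace.toDual_apply_apply] at hcomp
    exact hcomp
  set V : ℝ → ℝ := fun t => max (-(α * h (θ t))) 0 + max (J (θ t) - J θc) 0 with hV
  set DV : ℝ → ℝ := fun t =>
    dmx (-(α * h (θ t))) (-(α * ⟪gradient h (θ t), Fvec J h c (θ t)⟫)) +
      dmx (J (θ t) - J θc) ⟪gradient J (θ t), Fvec J h c (θ t)⟫ with hDV
  have hVd : ∀ t, t₀ ≤ t → HasDerivWithinAt V (DV t) (Ici t) t := by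
    intro t ht
    have hp : HasDerivAt (fun s => -(α * h (θ s)))
        (-(α * ⟪gradient h (θ t), Fvec J h c (θ t)⟫)) t :=
      (HasDerivAt.const_mul α (hderivθ t ht h hghd)).neg
    have hq : HasDerivAt (fun s => J (θ s) - J θc)
        ⟪gradient J (θ t), Fvec J h c (θ t)⟫ t :=
      (hderivθ t ht J hgJd).sub_const _
    exact (hasDerivWithinAt_max_zero hp).add (hasDerivWithinAt_max_zero hq)
  have hVc : ∀ t, t₀ ≤ t → ContinuousAt V t := by
    intro t ht
    have hθct : ContinuousAt θ t := (hθ t ht).continuousAt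
    exact (((continuousAt_const.mul (hghd.continuous.continuousAt.comp hθct)).neg).max
      continuousAt_const).add
      (((hgJd.continuous.continuousAt.comp hθct).sub continuousAt_const).max continuousAt_const)
  have hanti : AntitoneOn V (Ici t₀) := by
    intro t₁ h₁ t₂ h₂ h12
    exact fb_le_fa h12
      (fun t ht => (hVc t (le_trans h₁ ht.1)).continuousWithinAt)
      (fun t ht => hVd t (le_trans h₁ ht.1))
      (fun t ht => (hpoint (θ t) (hstay t (le_trans h₁ ht.1))).1)
  refine ⟨hanti, ?_⟩
  intro t₁ t₂ h01 h12 hne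
  by_contra hcon
  push_neg at hcon
  have h02 : t₀ ≤ t₂ := h01.trans h12.le
  have heq : V t₂ = V t₁ := le_antisymm (hanti h01 h02 h12.le) hcon
  have hconst : ∀ t ∈ Icc t₁ t₂, V t = V t₁ := by
    intro t ht
    have ha := hanti h01 (h01.trans ht.1) ht.1
    have hb := hanti (h01.trans ht.1) h02 ht.2
    rw [heq] at hb
    linarith
  have hD0 : DV t₁ = 0 := by
    have hU : UniqueDiffWithinAt ℝ (Icc t₁ t₂) t₁ :=
      (uniqueDiffOn_Icc h12) t₁ (left_mem_Icc.2 h12.le)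
    have hd1 : HasDerivWithinAt V (DV t₁) (Icc t₁ t₂) t₁ :=
      (hVd t₁ h01).mono Icc_subset_Ici_self
    have hd2 : HasDerivWithinAt V 0 (Icc t₁ t₂) t₁ :=
      (hasDerivWithinAt_const t₁ _ (V t₁)).congr (fun t ht => hconst t ht)
        (hconst t₁ (left_mem_Icc.2 h12.le))
    exact hU.eq_deriv _ hd1 hd2
  have hlt := (hpoint (θ t₁) (hstay t₁ h01)).2 (hne t₁ (left_mem_Icc.2 h12.le))
  have hlt2 : DV t₁ < 0 := hlt
  linarith
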